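/- Let P be a finite collection of subgroups of a finitely generated group G such that every P ∈ P has finite index in Comm_G(P), and let P* be a refinement of P. Then the identity map on G is a quasi-isometry of pairs (G,P) → (G,P*). -/

import Mathlib

open scoped Pointwise

variable {G : Type*} [Group G]

/-- Word distance between `g` and `h` with respect to a generating set `S` (values in `ℕ∞`). -/
noncomputable def wordDist (S : Set G) (g h : G) : ℕ∞ :=
  sInf {n : ℕ∞ | ∃ l : List G, (∀ x ∈ l, x ∈ S ∨ x⁻¹ ∈ S) ∧ l.prod = g⁻¹ * h ∧ (l.length : ℕ∞) = n}

/-- Closed `r`-neighbourhood of a subset of `G` in the word metric. -/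
def nbhd (S : Set G) (r : ℕ∞) (A : Set G) : Set G := {g | ∃ a ∈ A, wordDist S g a ≤ r}

/-- Hausdorff distance between subsets of `G` in the word metric. -/
noncomputable def hdist (S : Set G) (A B : Set G) : ℕ∞ :=
  sInf {r : ℕ∞ | A ⊆ nbhd S r B ∧ B ⊆ nbhd S r A}

/-- The conjugate subgroup `g P g⁻¹`. -/
def conjSub (g : G) (P : Subgroup G) : Subgroup G := ConjAct.toConjAct g • P

/-- The collection of all left cosets `gP`, `g ∈ G`, `P ∈ Ps`, as subsets of `G`. -/
def cosetsOf (Ps : Set (Subgroup G)) : Set (Set G) :=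
  {A | ∃ (g : G) (P : Subgroup G), P ∈ Ps ∧ A = g • (P : Set G)}

/-- A collection of subgroups is almost malnormal if any conjugate of a member meets any
member in a finite subgroup, except for the trivial configurations. -/
def AlmostMalnormal (Ps : Set (Subgroup G)) : Prop :=
  ∀ P ∈ Ps, ∀ P' ∈ Ps, ∀ g : G,
    ((conjSub g P ⊓ P' : Subgroup G) : Set G).Finite ∨ (P = P' ∧ g ∈ P)

/-- A collection of subgroups is reduced if commensurability of a member with a conjugate of a
member only happens trivially. -/
def Reduced (Ps : Set (Subgroup G)) : Prop :=
  ∀ P ∈ Ps, ∀ Q ∈ Ps, ∀ g : G, Subgroup.Commensurable P (conjSub g Q) → P = Q ∧ g ∈ P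

/-- `Pstar` is a refinement of `Ps`: a set of representatives of conjugacy classes of the
collection of commensurators of conjugates of members of `Ps`. -/
def IsRefinement (Ps Pstar : Set (Subgroup G)) : Prop :=
  (∀ Q ∈ Pstar, ∃ P ∈ Ps, ∃ g : G, Q = Subgroup.Commensurable.commensurator (conjSub g P)) ∧
  (∀ P ∈ Ps, ∀ g : G, ∃ Q ∈ Pstar, ∃ h : G,
      conjSub h Q = Subgroup.Commensurable.commensurator (conjSub g P)) ∧
  (∀ Q ∈ Pstar, ∀ Q' ∈ Pstar, (∃ h : G, conjSub h Q = Q') → Q = Q')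

/-- `q` is an `(L, C, M)`-quasi-isometry of pairs `(G, Ps) → (H, Qs)`: an `(L, C)`-quasi-isometry
of the groups (with respect to the word metrics of `S` and `T`) such that the relation
`{(A, B) : Hdist(q(A), B) < M}` on left cosets projects surjectively to both factors. -/
def IsQIPair {H : Type*} [Group H] (S : Set G) (T : Set H) (q : G → H)
    (Ps : Set (Subgroup G)) (Qs : Set (Subgroup H)) (L C M : ℕ) : Prop :=
  (∀ a b : G, wordDist T (q a) (q b) ≤ (L : ℕ∞) * wordDist S a b + (C : ℕ∞) ∧
      wordDist S a b ≤ (L : ℕ∞) * wordDist T (q a) (q b) + (C : ℕ∞)) ∧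
  (∀ h : H, ∃ g : G, wordDist T (q g) h ≤ (C : ℕ∞)) ∧
  (∀ A ∈ cosetsOf Ps, ∃ B ∈ cosetsOf Qs, hdist T (q '' A) B < (M : ℕ∞)) ∧
  (∀ B ∈ cosetsOf Qs, ∃ A ∈ cosetsOf Ps, hdist T (q '' A) B < (M : ℕ∞))

/-! ### Auxiliary lemmas -/

open Subgroup.Commensurable

/-- The word length of `g`: its word distance from the identity. -/
noncomputable def wlen (S : Set G) (g : G) : ℕ∞ := wordDist S 1 g

lemma wordDist_eq_wlen (S : Set G) (g h : G) : wordDist S g h = wlen S (g⁻¹ * h) := by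
  simp [wlen, wordDist]

lemma wlen_le (S : Set G) {g : G} {l : List G} (hl : ∀ x ∈ l, x ∈ S ∨ x⁻¹ ∈ S)
    (hp : l.prod = g) : wlen S g ≤ (l.length : ℕ∞) :=
  sInf_le ⟨l, hl, by simp [hp], rfl⟩

lemma wlen_lt_top (S : Set G) (hgen : Subgroup.closure S = ⊤) (g : G) : wlen S g < ⊤ := by
  have hg : g ∈ Submonoid.closure (S ∪ S⁻¹) := by
    rw [← Subgroup.closure_toSubmonoid]
    exact (hgen ▸ Subgroup.mem_top g : g ∈ Subgroup.closure S)
  obtain ⟨l, hl, hp⟩ := Submonoid.exists_list_of_mem_closure hg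
  refine lt_of_le_of_lt (wlen_le S (fun x hx => ?_) hp) (by simp)
  rcases hl x hx with h | h
  · exact Or.inl h
  · exact Or.inr (by simpa [Set.mem_inv] using h)

lemma mem_conjSub {g x : G} {P : Subgroup G} : x ∈ conjSub g P ↔ g⁻¹ * x * g ∈ P := by
  constructor
  · rintro ⟨y, hy, rfl⟩
    simpa [ConjAct.smul_def, mul_assoc] using hy
  · intro h
    exact ⟨g⁻¹ * x * g, h, by simp [ConjAct.smul_def, mul_assoc]⟩

lemma conjSub_one (P : Subgroup G) : conjSub 1 P = P := by
  simp [conjSub]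

lemma conjSub_mul (a b : G) (P : Subgroup G) : conjSub a (conjSub b P) = conjSub (a * b) P := by
  simp [conjSub, map_mul, mul_smul]

lemma conjSub_self_eq {p : G} {P : Subgroup G} (hp : p ∈ P) : conjSub p P = P := by
  ext x
  rw [mem_conjSub]
  constructor
  · intro h
    have := P.mul_mem (P.mul_mem hp h) (P.inv_mem hp)
    simpa [mul_assoc] using this
  · intro h
    exact P.mul_mem (P.mul_mem (P.inv_mem hp) h) hp

lemma le_commensurator' (P : Subgroup G) : P ≤ commensurator P := fun p hp => by
  rw [commensurator_mem_iff,
    show (ConjAct.toConjAct p • P : Subgroup G) = conjSub p P from rfl, conjSub_self_eq hp]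

lemma commensurator_conjSub (g : G) (P : Subgroup G) :
    commensurator (conjSub g P) = conjSub g (commensurator P) := by
  ext x
  rw [mem_conjSub, commensurator_mem_iff, commensurator_mem_iff,
    show (ConjAct.toConjAct x • conjSub g P : Subgroup G) = conjSub x (conjSub g P) from rfl,
    show (ConjAct.toConjAct (g⁻¹ * x * g) • P : Subgroup G) = conjSub (g⁻¹ * x * g) P from rfl,
    conjSub_mul, commensurable_conj (ConjAct.toConjAct g⁻¹)]
  have e1 : ConjAct.toConjAct g⁻¹ • conjSub (x * g) P = conjSub (g⁻¹ * x * g) P := by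
    rw [show (ConjAct.toConjAct g⁻¹ • conjSub (x*g) P : Subgroup G)
        = conjSub g⁻¹ (conjSub (x*g) P) from rfl, conjSub_mul, mul_assoc]
  have e2 : ConjAct.toConjAct g⁻¹ • conjSub g P = P := by
    rw [show (ConjAct.toConjAct g⁻¹ • conjSub g P : Subgroup G)
        = conjSub g⁻¹ (conjSub g P) from rfl, conjSub_mul, inv_mul_cancel, conjSub_one]
  rw [e1, e2]

lemma exists_right_coset_reps (P K : Subgroup G) (hrel : P.relIndex K ≠ 0) :
    ∃ T : Finset G, ∀ k ∈ K, ∃ t ∈ T, ∃ p ∈ P, k = p * t := by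
  have hfin : Finite (K ⧸ P.subgroupOf K) := by
    rw [Subgroup.relIndex, Subgroup.index] at hrel
    exact (Nat.card_ne_zero.mp hrel).2
  classical
  have hfs : (Set.range fun c : K ⧸ P.subgroupOf K => ((Quotient.out c : K) : G)⁻¹).Finite :=
    Set.finite_range _
  refine ⟨hfs.toFinset, fun k hk => ?_⟩
  set k' : K := ⟨k, hk⟩
  set c : K ⧸ P.subgroupOf K := QuotientGroup.mk k'⁻¹
  set r : K := Quotient.out c
  have hr : (QuotientGroup.mk r : K ⧸ P.subgroupOf K) = QuotientGroup.mk k'⁻¹ :=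
    Quotient.out_eq c
  have hmem : r⁻¹ * k'⁻¹ ∈ P.subgroupOf K := QuotientGroup.eq.mp hr
  rw [Subgroup.mem_subgroupOf] at hmem
  refine ⟨((r : G))⁻¹, by rw [Set.Finite.mem_toFinset]; exact ⟨c, rfl⟩, ((r⁻¹ * k'⁻¹ : K) : G)⁻¹,
    P.inv_mem hmem, ?_⟩
  push_cast
  group
  rfl

lemma forward_bound (S : Set G) (hgen : Subgroup.closure S = ⊤) {Ps Pstar : Set (Subgroup G)}
    (href : IsRefinement Ps Pstar) {P : Subgroup G} (hP : P ∈ Ps)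
    (hfiP : P.relIndex (commensurator P) ≠ 0) :
    ∃ N : ℕ, ∀ g : G, ∃ B ∈ cosetsOf Pstar, hdist S (g • (P : Set G)) B < (N : ℕ∞) := by
  classical
  obtain ⟨Q, hQ, h, hconj⟩ := href.2.1 P hP 1
  rw [conjSub_one] at hconj
  obtain ⟨T, hT⟩ := exists_right_coset_reps P (commensurator P) hfiP
  set r : ℕ∞ := wlen S h ⊔ T.sup (fun t => wlen S (h⁻¹ * t⁻¹)) with hr
  have hrtop : r < ⊤ := by
    refine max_lt (wlen_lt_top S hgen h) ?_
    exact (Finset.sup_lt_iff (by simp)).mpr fun t _ => wlen_lt_top S hgen _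
  obtain ⟨n, hn⟩ := WithTop.ne_top_iff_exists.mp hrtop.ne
  refine ⟨n + 1, fun g => ⟨(g * h) • (Q : Set G), ⟨g * h, Q, hQ, rfl⟩, ?_⟩⟩
  have hle : hdist S (g • (P : Set G)) ((g * h) • (Q : Set G)) ≤ r := by
    refine sInf_le ⟨?_, ?_⟩
    · rintro a ⟨p, hp, rfl⟩
      have hqm : h⁻¹ * p * h ∈ Q := by
        rw [← mem_conjSub, hconj]; exact le_commensurator' P hp
      refine ⟨(g * h) * (h⁻¹ * p * h), ⟨h⁻¹ * p * h, hqm, rfl⟩, ?_⟩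
      simp only [smul_eq_mul]
      rw [wordDist_eq_wlen,
        show (g * p)⁻¹ * ((g * h) * (h⁻¹ * p * h)) = h by group]
      exact le_max_left _ _
    · rintro b ⟨q, hq, rfl⟩
      have hkK : h * q * h⁻¹ ∈ commensurator P := by
        rw [← hconj, mem_conjSub]
        simpa [mul_assoc] using hq
      obtain ⟨t, htT, p, hpP, hk⟩ := hT _ hkK
      have hq' : q = h⁻¹ * (p * t) * h := by rw [← hk]; group
      refine ⟨g * p, ⟨p, hpP, rfl⟩, ?_⟩
      simp only [smul_eq_mul]
      rw [wordDist_eq_wlen,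
        show ((g * h) * q)⁻¹ * (g * p) = h⁻¹ * t⁻¹ by rw [hq']; group]
      exact le_trans (Finset.le_sup (f := fun t => wlen S (h⁻¹ * t⁻¹)) htT) (le_max_right _ _)
  refine lt_of_le_of_lt hle ?_
  rw [← hn]
  exact Nat.cast_lt.mpr (Nat.lt_succ_self n)

lemma backward_bound (S : Set G) (hgen : Subgroup.closure S = ⊤) {Ps Pstar : Set (Subgroup G)}
    (href : IsRefinement Ps Pstar)
    (hfi : ∀ P ∈ Ps, P.relIndex (commensurator P) ≠ 0) {Q : Subgroup G} (hQ : Q ∈ Pstar) :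
    ∃ N : ℕ, ∀ x : G, ∃ A ∈ cosetsOf Ps, hdist S A (x • (Q : Set G)) < (N : ℕ∞) := by
  classical
  obtain ⟨P, hP, g, hQeq⟩ := href.1 Q hQ
  rw [commensurator_conjSub] at hQeq
  obtain ⟨T, hT⟩ := exists_right_coset_reps P (commensurator P) (hfi P hP)
  set r : ℕ∞ := wlen S g⁻¹ ⊔ T.sup (fun t => wlen S (g * t⁻¹)) with hr
  have hrtop : r < ⊤ := by
    refine max_lt (wlen_lt_top S hgen _) ?_
    exact (Finset.sup_lt_iff (by simp)).mpr fun t _ => wlen_lt_top S hgen _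
  obtain ⟨n, hn⟩ := WithTop.ne_top_iff_exists.mp hrtop.ne
  refine ⟨n + 1, fun x => ⟨(x * g) • (P : Set G), ⟨x * g, P, hP, rfl⟩, ?_⟩⟩
  have hle : hdist S ((x * g) • (P : Set G)) (x • (Q : Set G)) ≤ r := by
    refine sInf_le ⟨?_, ?_⟩
    · rintro a ⟨p, hp, rfl⟩
      have hqm : g * p * g⁻¹ ∈ Q := by
        rw [hQeq, mem_conjSub]
        simpa [mul_assoc] using le_commensurator' P hp
      refine ⟨x * (g * p * g⁻¹), ⟨g * p * g⁻¹, hqm, rfl⟩, ?_⟩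
      simp only [smul_eq_mul]
      rw [wordDist_eq_wlen,
        show ((x * g) * p)⁻¹ * (x * (g * p * g⁻¹)) = g⁻¹ by group]
      exact le_max_left _ _
    · rintro b ⟨q, hq, rfl⟩
      have hkK : g⁻¹ * q * g ∈ commensurator P := by
        rw [← mem_conjSub, ← hQeq]; exact hq
      obtain ⟨t, htT, p, hpP, hk⟩ := hT _ hkK
      have hq' : q = g * (p * t) * g⁻¹ := by rw [← hk]; group
      refine ⟨(x * g) * p, ⟨p, hpP, rfl⟩, ?_⟩
      simp only [smul_eq_mul]
      rw [wordDist_eq_wlen,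
        show (x * q)⁻¹ * ((x * g) * p) = g * t⁻¹ by rw [hq']; group]
      exact le_trans (Finset.le_sup (f := fun t => wlen S (g * t⁻¹)) htT) (le_max_right _ _)
  refine lt_of_le_of_lt hle ?_
  rw [← hn]
  exact Nat.cast_lt.mpr (Nat.lt_succ_self n)

lemma pstar_finite {Ps Pstar : Set (Subgroup G)} (hPs : Ps.Finite)
    (href : IsRefinement Ps Pstar) : Pstar.Finite := by
  classical
  choose! f hfPs gg hgeq using href.1
  refine Set.Finite.of_finite_image (f := f) (hPs.subset ?_) (fun Q hQ Q' hQ' hfe => ?_)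
  · rintro _ ⟨Q, hQ, rfl⟩; exact hfPs Q hQ
  · have e : Q = conjSub (gg Q) (commensurator (f Q)) :=
      (hgeq Q hQ).trans (commensurator_conjSub (gg Q) (f Q))
    have e' : Q' = conjSub (gg Q') (commensurator (f Q')) :=
      (hgeq Q' hQ').trans (commensurator_conjSub (gg Q') (f Q'))
    have e2 : conjSub (gg Q' * (gg Q)⁻¹) Q = Q' := by
      calc conjSub (gg Q' * (gg Q)⁻¹) Q
          = conjSub (gg Q' * (gg Q)⁻¹) (conjSub (gg Q) (commensurator (f Q))) := by rw [← e]
        _ = conjSub (gg Q' * (gg Q)⁻¹ * gg Q) (commensurator (f Q)) := conjSub_mul _ _ _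
        _ = conjSub (gg Q') (commensurator (f Q')) := by
            rw [hfe, show gg Q' * (gg Q)⁻¹ * gg Q = gg Q' by group]
        _ = Q' := e'.symm
    exact href.2.2 Q hQ Q' hQ' ⟨_, e2⟩

/-- If every member of the finite collection `Ps` has finite index in its
commensurator and `Pstar` is a refinement of `Ps`, then the identity map of `G` is a
quasi-isometry of pairs `(G, Ps) → (G, Pstar)`. -/
theorem id_qiPair_refinement (S : Set G) (hS : S.Finite) (hgen : Subgroup.closure S = ⊤)
    (Ps Pstar : Set (Subgroup G)) (hPs : Ps.Finite)
    (hfi : ∀ P ∈ Ps, P.relIndex (Subgroup.Commensurable.commensurator P) ≠ 0)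
    (href : IsRefinement Ps Pstar) :
    ∃ L C M : ℕ, IsQIPair S S (id : G → G) Ps Pstar L C M := by
  classical
  have hPstar : Pstar.Finite := pstar_finite hPs href
  have hfwd : ∀ P : Subgroup G, ∃ N : ℕ, P ∈ Ps →
      ∀ g : G, ∃ B ∈ cosetsOf Pstar, hdist S (g • (P : Set G)) B < (N : ℕ∞) := by
    intro P
    by_cases hP : P ∈ Ps
    · obtain ⟨N, hN⟩ := forward_bound S hgen href hP (hfi P hP)
      exact ⟨N, fun _ => hN⟩
    · exact ⟨0, fun h => absurd h hP⟩
  have hbwd : ∀ Q : Subgroup G, ∃ N : ℕ, Q ∈ Pstar →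
      ∀ x : G, ∃ A ∈ cosetsOf Ps, hdist S A (x • (Q : Set G)) < (N : ℕ∞) := by
    intro Q
    by_cases hQ : Q ∈ Pstar
    · obtain ⟨N, hN⟩ := backward_bound S hgen href hfi hQ
      exact ⟨N, fun _ => hN⟩
    · exact ⟨0, fun h => absurd h hQ⟩
  choose F hF using hfwd
  choose F' hF' using hbwd
  set M : ℕ := hPs.toFinset.sup F ⊔ hPstar.toFinset.sup F' with hM
  refine ⟨1, 0, M, ?_, ?_, ?_, ?_⟩
  · intro a b
    constructor <;> simp
  · intro h
    refine ⟨h, ?_⟩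
    rw [wordDist_eq_wlen]
    simpa using wlen_le S (l := []) (fun x hx => absurd hx List.not_mem_nil) (by simp)
  · rintro A ⟨g, P, hP, rfl⟩
    obtain ⟨B, hB, hlt⟩ := hF P hP g
    refine ⟨B, hB, ?_⟩
    rw [Set.image_id]
    refine lt_of_lt_of_le hlt ?_
    exact_mod_cast le_trans (Finset.le_sup (hPs.mem_toFinset.mpr hP)) le_sup_left
  · rintro B ⟨x, Q, hQ, rfl⟩
    obtain ⟨A, ⟨g', P', hP', hAeq⟩, hlt⟩ := hF' Q hQ x
    refine ⟨A, ⟨g', P', hP', hAeq⟩, ?_⟩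
    rw [Set.image_id]
    refine lt_of_lt_of_le hlt ?_
    exact_mod_cast le_trans (Finset.le_sup (hPstar.mem_toFinset.mpr hQ)) le_sup_right
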